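/- In the one-period model on Ω = (0,1], let Φ(y) = −ln(y) for 0 < y ≤ 1 and Φ(y) = y² − 3y + 2 for y > 1, so that Φ is convex on (0,∞) and Φ(0) := lim_{y↓0}Φ(y) = +∞. Let Q₁ be the probability measure with density 2·1_{(1/2,1]} with respect to P, and let Q₀ be the probability measure with density equal to c·n·e^{−n} on J_n^1 and c·e^{−n} on J_n^2, where c = (Σ_{n≥1}(n+1)e^{−n}2^{−(n+1)})^{−1}. Then: (i) Q₀ and Q₁ are separating measures; (ii) E_P[Φ(dQ₀/dP)] < +∞ while E_P[Φ(dQ₁/dP)] = +∞; (iii) nevertheless, for every x ∈ (0,1) the convex combination Q^x = (1−x)Q₀ + xQ₁ satisfies E_P[Φ(dQ^x/dP)] < +∞. In particular, when Φ(0) = +∞ a convex combination can have finite generalized entropy even though one of its components does not. -/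

import Mathlib

open MeasureTheory
open scoped ENNReal

/-- `P`: Lebesgue measure restricted to `Ω = (0,1]`. -/
noncomputable def Pmeas : Measure ℝ := MeasureTheory.volume.restrict (Set.Ioc 0 1)

/-- `I_n = (2^{-n}, 2^{-(n-1)}]` (intended for `n ≥ 1`). -/
def Iset (n : ℕ) : Set ℝ := Set.Ioc ((2 : ℝ) ^ n)⁻¹ ((2 : ℝ) ^ (n - 1))⁻¹

/-- `J_n^1 = (2^{-n}, 3·2^{-(n+1)}]`. -/
def J1 (n : ℕ) : Set ℝ := Set.Ioc ((2 : ℝ) ^ n)⁻¹ (3 * ((2 : ℝ) ^ (n + 1))⁻¹)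

/-- `J_n^2 = (3·2^{-(n+1)}, 2^{-(n-1)}]`. -/
def J2 (n : ℕ) : Set ℝ := Set.Ioc (3 * ((2 : ℝ) ^ (n + 1))⁻¹) ((2 : ℝ) ^ (n - 1))⁻¹

/-- A strategy: a function constant, equal to some `a n`, on each `I_n`. -/
def IsStrategy (α : ℝ → ℝ) : Prop :=
  ∃ a : ℕ → ℝ, ∀ n : ℕ, 1 ≤ n → ∀ ω ∈ Iset n, α ω = a n

/-- An admissible strategy: a strategy whose gain `α·X₁` is bounded below by a constant
`-c`, `P`-a.s. -/
def IsAdmissible (X₁ α : ℝ → ℝ) : Prop :=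
  IsStrategy α ∧ ∃ c : ℝ, 0 ≤ c ∧ ∀ᵐ ω ∂Pmeas, -c ≤ α ω * X₁ ω

/-- The separating measures of the one-period model: probabilities `Q ≪ P` such that
`α·X₁ ∈ L¹(Q)` and `E_Q[α·X₁] ≤ 0` for every admissible strategy `α`. -/
def SepMeasures (X₁ : ℝ → ℝ) : Set (Measure ℝ) :=
  {Q | IsProbabilityMeasure Q ∧ Q ≪ Pmeas ∧
    ∀ α : ℝ → ℝ, IsAdmissible X₁ α →
      Integrable (fun ω => α ω * X₁ ω) Q ∧ ∫ ω, α ω * X₁ ω ∂Q ≤ 0}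

/-- The convex function `Φ` of Example 21: `Φ(y) = -log y` on `(0,1]` and
`Φ(y) = y² - 3y + 2` for `y > 1`; its limit at `0⁺` is `Φ(0) = +∞`. -/
noncomputable def Phi (y : ℝ) : ℝ := if y ≤ 1 then -Real.log y else y ^ 2 - 3 * y + 2

/-- The positive part of the generalized entropy `E_P[Φ(dQ/dP)]` of a density `d`, where
`Φ(dQ/dP)` is read as `Φ(0) = +∞` on `{d = 0}`.  Since `Φ ≥ -1/4`, the generalized
entropy is finite iff this quantity is `< ⊤`, and equals `+∞` iff it is `⊤`. -/
noncomputable def entPos (d : ℝ → ℝ) : ℝ≥0∞ :=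
  ∫⁻ ω, (if d ω = 0 then ⊤ else ENNReal.ofReal (Phi (d ω))) ∂Pmeas


noncomputable def PhiD (y : ℝ) : ℝ := if y ≤ 1 then -y⁻¹ else 2 * y - 3

noncomputable def tser (n : ℕ) : ℝ :=
  ((n : ℝ) + 2) * Real.exp (-((n : ℝ) + 1)) * (((2 : ℝ) ^ (n + 2))⁻¹)

lemma J1_union_J2 {n : ℕ} (hn : 1 ≤ n) : J1 n ∪ J2 n = Iset n := by
  obtain ⟨m, rfl⟩ := Nat.exists_eq_add_of_le' hn
  have ht : (0:ℝ) < ((2:ℝ)^m)⁻¹ := by positivity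
  have e1 : ((2:ℝ)^(m+1))⁻¹ = ((2:ℝ)^m)⁻¹/2 := by rw [pow_succ, mul_inv]; ring
  have e2 : ((2:ℝ)^(m+1+1))⁻¹ = ((2:ℝ)^m)⁻¹/4 := by
    rw [pow_succ, pow_succ, mul_inv, mul_inv]; ring
  rw [J1, J2, Iset, Set.Ioc_union_Ioc_eq_Ioc]
  · rw [e1, e2]; linarith
  · simp only [Nat.add_sub_cancel]
    rw [e2]; linarith

lemma J1_J2_disjoint (n : ℕ) : Disjoint (J1 n) (J2 n) := Set.Ioc_disjoint_Ioc_of_le le_rfl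

lemma Iset_subset {n : ℕ} (hn : 1 ≤ n) : Iset n ⊆ Set.Ioc 0 1 := by
  intro x hx
  obtain ⟨h1, h2⟩ := hx
  constructor
  · exact lt_trans (by positivity) h1
  · refine le_trans h2 ?_
    rw [inv_le_one_iff₀]
    right
    exact one_le_pow₀ (by norm_num : (1:ℝ) ≤ 2)

lemma J1_subset {n : ℕ} (hn : 1 ≤ n) : J1 n ⊆ Set.Ioc 0 1 :=
  (Set.subset_union_left).trans (J1_union_J2 hn ▸ Iset_subset hn)

lemma J2_subset {n : ℕ} (hn : 1 ≤ n) : J2 n ⊆ Set.Ioc 0 1 :=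
  (Set.subset_union_right).trans (J1_union_J2 hn ▸ Iset_subset hn)

lemma vol_J1 {n : ℕ} (hn : 1 ≤ n) : volume (J1 n) = ENNReal.ofReal (((2:ℝ)^(n+1))⁻¹) := by
  rw [J1, Real.volume_Ioc]
  congr 1
  rw [pow_succ, mul_inv]
  have ht : (0:ℝ) < ((2:ℝ)^n)⁻¹ := by positivity
  norm_num
  linarith

lemma vol_J2 {n : ℕ} (hn : 1 ≤ n) : volume (J2 n) = ENNReal.ofReal (((2:ℝ)^(n+1))⁻¹) := by
  obtain ⟨m, rfl⟩ := Nat.exists_eq_add_of_le' hn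
  rw [J2, Real.volume_Ioc]
  congr 1
  simp only [Nat.add_sub_cancel]
  rw [pow_succ, pow_succ, mul_inv, mul_inv]
  have ht : (0:ℝ) < ((2:ℝ)^m)⁻¹ := by positivity
  norm_num
  linarith

lemma Iset_pairwise_disjoint :
    Pairwise (Function.onFun Disjoint (fun m : ℕ => Iset (m + 1))) := by
  have key : ∀ i j : ℕ, i < j → Disjoint (Iset (i+1)) (Iset (j+1)) := by
    intro i j hij
    refine Set.disjoint_left.mpr fun x hxi hxj => ?_
    have h1 : ((2:ℝ)^(i+1))⁻¹ < x := hxi.1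
    have h2 : x ≤ ((2:ℝ)^(j+1-1))⁻¹ := hxj.2
    simp only [Nat.add_sub_cancel] at h2
    have : ((2:ℝ)^j)⁻¹ ≤ ((2:ℝ)^(i+1))⁻¹ := by
      apply inv_anti₀ (by positivity)
      exact pow_le_pow_right₀ (by norm_num) hij
    linarith
  intro i j hij
  rcases hij.lt_or_gt with h | h
  · exact key i j h
  · exact (key j i h).symm

lemma iUnion_Iset : (⋃ m : ℕ, Iset (m + 1)) = Set.Ioc 0 1 := by
  apply Set.Subset.antisymm
  · exact Set.iUnion_subset fun m => Iset_subset (Nat.le_add_left 1 m)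
  · intro x hx
    obtain ⟨hx0, hx1⟩ := hx
    have hex : ∃ k : ℕ, ((2:ℝ)^(k+1))⁻¹ < x := by
      obtain ⟨k, hk⟩ := pow_unbounded_of_one_lt x⁻¹ (by norm_num : (1:ℝ) < 2)
      exact ⟨k, by rw [inv_lt_comm₀ (by positivity) hx0]; exact hk.trans_le (pow_le_pow_right₀ (by norm_num) (Nat.le_succ k))⟩
    classical
    have hk : ((2:ℝ)^(Nat.find hex+1))⁻¹ < x := Nat.find_spec hex
    refine Set.mem_iUnion.mpr ⟨Nat.find hex, hk, ?_⟩
    simp only [Nat.add_sub_cancel]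
    rcases Nat.eq_zero_or_pos (Nat.find hex) with h0 | h0
    · rw [h0]; simpa using hx1
    · have hlt := Nat.find_min hex (Nat.sub_lt h0 one_pos)
      have heq : Nat.find hex - 1 + 1 = Nat.find hex := by omega
      rw [heq] at hlt
      exact not_lt.mp hlt

lemma mem_Iset_bound {n : ℕ} (hn : 1 ≤ n) {ω : ℝ} (hω : ω ∈ Iset n) :
    ((n:ℝ) - 1) * Real.log 2 ≤ -Real.log ω := by
  obtain ⟨m, rfl⟩ := Nat.exists_eq_add_of_le' hn
  have h2 : ω ≤ ((2:ℝ)^m)⁻¹ := by simpa [Iset] using hω.2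
  have hω0 : 0 < ω := lt_trans (by positivity) hω.1
  have := Real.log_le_log hω0 h2
  rw [Real.log_inv, Real.log_pow] at this
  push_cast
  linarith

lemma phi_hasDerivAt {y : ℝ} (hy : 0 < y) : HasDerivAt Phi (PhiD y) y := by
  rcases lt_trichotomy y 1 with h | h | h
  · have : HasDerivAt (fun z => -Real.log z) (-y⁻¹) y := (Real.hasDerivAt_log hy.ne').neg
    have hev : (fun z => -Real.log z) =ᶠ[nhds y] Phi := by
      filter_upwards [eventually_lt_nhds h] with z hz
      simp [Phi, hz.le]
    rw [PhiD, if_pos h.le]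
    exact this.congr_of_eventuallyEq hev.symm
  · subst h
    have h1 : HasDerivWithinAt Phi (-1) (Set.Iic 1) 1 := by
      have : HasDerivAt (fun z => -Real.log z) (-1) 1 := by
        exact (Real.hasDerivAt_log one_ne_zero).neg.congr_deriv (by norm_num)
      refine (this.hasDerivWithinAt).congr (fun z hz => ?_) (by simp [Phi])
      simp [Phi, (Set.mem_Iic.mp hz)]
    have h2 : HasDerivWithinAt Phi (-1) (Set.Ici 1) 1 := by
      have : HasDerivAt (fun z : ℝ => z ^ 2 - 3 * z + 2) (-1) 1 := by
        have := (((hasDerivAt_pow 2 (1:ℝ))).sub ((hasDerivAt_id (1:ℝ)).const_mul 3)).add_const 2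
        exact this.congr_deriv (by norm_num)
      refine (this.hasDerivWithinAt).congr (fun z hz => ?_) (by norm_num [Phi])
      rcases eq_or_lt_of_le (Set.mem_Ici.mp hz) with h | h
      · simp only [Phi, ← h]
        norm_num
      · simp [Phi, not_le.mpr h]
    have := h1.union h2
    rw [Set.Iic_union_Ici, hasDerivWithinAt_univ] at this
    simpa [PhiD] using this
  · have : HasDerivAt (fun z : ℝ => z ^ 2 - 3 * z + 2) (2 * y - 3) y := by
      have := (((hasDerivAt_pow 2 y)).sub ((hasDerivAt_id y).const_mul 3)).add_const 2
      simpa [mul_comm] using this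
    have hev : (fun z : ℝ => z ^ 2 - 3 * z + 2) =ᶠ[nhds y] Phi := by
      filter_upwards [eventually_gt_nhds h] with z hz
      simp [Phi, not_le.mpr hz]
    rw [PhiD, if_neg (not_le.mpr h)]
    exact this.congr_of_eventuallyEq hev.symm

lemma phi_convex : ConvexOn ℝ (Set.Ioi 0) Phi := by
  have hD : ∀ y ∈ Set.Ioi (0:ℝ), deriv Phi y = PhiD y := fun y hy => (phi_hasDerivAt hy).deriv
  refine MonotoneOn.convexOn_of_deriv (convex_Ioi 0) ?_ ?_ ?_
  · intro y hy
    exact (phi_hasDerivAt hy).continuousAt.continuousWithinAt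
  · rw [interior_Ioi]
    intro y hy
    exact (phi_hasDerivAt hy).differentiableAt.differentiableWithinAt
  · rw [interior_Ioi]
    intro x hx y hy hxy
    rw [hD x hx, hD y hy]
    unfold PhiD
    rcases le_or_gt x 1 with h1 | h1 <;> rcases le_or_gt y 1 with h2 | h2
    · rw [if_pos h1, if_pos h2]
      have := inv_anti₀ (Set.mem_Ioi.mp hx) hxy
      linarith
    · rw [if_pos h1, if_neg (not_le.mpr h2)]
      have : (1:ℝ) ≤ x⁻¹ := (one_le_inv₀ (Set.mem_Ioi.mp hx)).mpr h1
      linarith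
    · linarith
    · rw [if_neg (not_le.mpr h1), if_neg (not_le.mpr h2)]
      linarith

lemma phi_tendsto : Filter.Tendsto Phi (nhdsWithin 0 (Set.Ioi 0)) Filter.atTop := by
  have h1 : Filter.Tendsto (fun y => -Real.log y) (nhdsWithin 0 (Set.Ioi 0)) Filter.atTop := by
    exact Filter.tendsto_neg_atBot_atTop.comp Real.tendsto_log_nhdsGT_zero
  refine h1.congr' ?_
  filter_upwards [eventually_nhdsWithin_of_eventually_nhds
    (eventually_le_nhds (by norm_num : (0:ℝ) < 1))] with y hy
  simp [Phi, hy]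

lemma tser_nonneg (n : ℕ) : 0 ≤ tser n := by
  unfold tser; positivity

lemma tser_eq (n : ℕ) : tser n = ((n:ℝ) + 2) * ((Real.exp 1 * 2)⁻¹)^n * (Real.exp 1 * 4)⁻¹ := by
  unfold tser
  have hen : Real.exp (-((n:ℝ)+1)) = (Real.exp 1)⁻¹ ^ n * (Real.exp 1)⁻¹ := by
    rw [Real.exp_neg, Real.exp_add, ← Real.exp_one_pow, mul_inv, inv_pow]
  rw [hen, pow_add]
  simp only [mul_inv, inv_pow, mul_pow]
  generalize (2:ℝ)^n = t
  ring

lemma tser_summable : Summable tser := by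
  have hr : ‖(Real.exp 1 * 2)⁻¹‖ < 1 := by
    rw [Real.norm_eq_abs, abs_inv, abs_of_pos (by positivity)]
    rw [inv_lt_one_iff₀]
    right
    nlinarith [Real.exp_one_gt_d9]
  have h1 := summable_pow_mul_geometric_of_norm_lt_one 1 hr
  have h0 := summable_pow_mul_geometric_of_norm_lt_one 0 hr
  have := ((h1.add (h0.mul_left 2)).mul_right ((Real.exp 1 * 4)⁻¹))
  refine this.congr fun n => ?_
  rw [tser_eq]
  push_cast
  ring

lemma tsum_tser_pos : 0 < ∑' n, tser n :=
  Summable.tsum_pos tser_summable tser_nonneg 0 (by unfold tser; positivity)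

-- decomposition of lintegral over Pmeas
lemma lintegral_Pmeas_eq (f : ℝ → ℝ≥0∞) :
    ∫⁻ ω, f ω ∂Pmeas
      = ∑' m : ℕ, ((∫⁻ ω in J1 (m+1), f ω) + ∫⁻ ω in J2 (m+1), f ω) := by
  have h1 : ∫⁻ ω, f ω ∂Pmeas = ∫⁻ ω in ⋃ m : ℕ, Iset (m+1), f ω := by
    rw [Pmeas, iUnion_Iset]
  rw [h1, lintegral_iUnion (s := fun m => Iset (m+1)) (fun _ => measurableSet_Ioc)
    Iset_pairwise_disjoint]
  refine tsum_congr fun m => ?_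
  have h2 : Iset (m+1) = J1 (m+1) ∪ J2 (m+1) := (J1_union_J2 (Nat.le_add_left 1 m)).symm
  rw [h2]
  exact lintegral_union measurableSet_Ioc (J1_J2_disjoint _)

lemma lintegral_Pmeas_eq_of_piecewise (f : ℝ → ℝ≥0∞) (v1 v2 : ℕ → ℝ≥0∞)
    (h1 : ∀ n : ℕ, 1 ≤ n → ∀ ω ∈ J1 n, f ω = v1 n)
    (h2 : ∀ n : ℕ, 1 ≤ n → ∀ ω ∈ J2 n, f ω = v2 n) :
    ∫⁻ ω, f ω ∂Pmeas
      = ∑' m : ℕ, (v1 (m+1) + v2 (m+1)) * ENNReal.ofReal (((2:ℝ)^(m+2))⁻¹) := by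
  rw [lintegral_Pmeas_eq]
  refine tsum_congr fun m => ?_
  have hm : 1 ≤ m + 1 := Nat.le_add_left 1 m
  have e1 : ∫⁻ ω in J1 (m+1), f ω = v1 (m+1) * ENNReal.ofReal (((2:ℝ)^(m+2))⁻¹) :=
    calc ∫⁻ ω in J1 (m+1), f ω = ∫⁻ _ in J1 (m+1), v1 (m+1) :=
        setLIntegral_congr_fun measurableSet_Ioc (h1 (m+1) hm)
      _ = v1 (m+1) * volume (J1 (m+1)) := setLIntegral_const _ _
      _ = _ := by rw [vol_J1 hm]
  have e2 : ∫⁻ ω in J2 (m+1), f ω = v2 (m+1) * ENNReal.ofReal (((2:ℝ)^(m+2))⁻¹) :=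
    calc ∫⁻ ω in J2 (m+1), f ω = ∫⁻ _ in J2 (m+1), v2 (m+1) :=
        setLIntegral_congr_fun measurableSet_Ioc (h2 (m+1) hm)
      _ = v2 (m+1) * volume (J2 (m+1)) := setLIntegral_const _ _
      _ = _ := by rw [vol_J2 hm]
  rw [add_mul]
  exact congrArg₂ (· + ·) e1 e2

lemma isProb_Q0 (c : ℝ) (hc' : c = (∑' n, tser n)⁻¹) (d₀ : ℝ → ℝ)
    (hd₀ : ∀ n : ℕ, 1 ≤ n →
      (∀ ω ∈ J1 n, d₀ ω = c * (n : ℝ) * Real.exp (-(n : ℝ))) ∧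
      (∀ ω ∈ J2 n, d₀ ω = c * Real.exp (-(n : ℝ)))) :
    IsProbabilityMeasure (Pmeas.withDensity fun ω => ENNReal.ofReal (d₀ ω)) := by
  have hc0 : 0 < c := hc' ▸ inv_pos.mpr tsum_tser_pos
  constructor
  rw [withDensity_apply _ MeasurableSet.univ, Measure.restrict_univ]
  rw [lintegral_Pmeas_eq_of_piecewise _
      (fun n => ENNReal.ofReal (c * (n : ℝ) * Real.exp (-(n : ℝ))))
      (fun n => ENNReal.ofReal (c * Real.exp (-(n : ℝ))))
      (fun n hn ω hω => by rw [(hd₀ n hn).1 ω hω])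
      (fun n hn ω hω => by rw [(hd₀ n hn).2 ω hω])]
  have key : ∀ m : ℕ,
      (ENNReal.ofReal (c * ((m:ℝ)+1) * Real.exp (-((m:ℝ)+1)))
        + ENNReal.ofReal (c * Real.exp (-((m:ℝ)+1)))) * ENNReal.ofReal (((2:ℝ)^(m+2))⁻¹)
      = ENNReal.ofReal (c * tser m) := by
    intro m
    rw [← ENNReal.ofReal_add (by positivity) (by positivity),
      ← ENNReal.ofReal_mul (by positivity)]
    congr 1
    unfold tser
    ring
  have cast1 : ∀ m : ℕ, ((m + 1 : ℕ) : ℝ) = (m : ℝ) + 1 := fun m => by push_cast; ring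
  calc ∑' m : ℕ, (ENNReal.ofReal (c * ((m+1 : ℕ) : ℝ) * Real.exp (-((m+1:ℕ) : ℝ)))
        + ENNReal.ofReal (c * Real.exp (-((m+1:ℕ) : ℝ)))) * ENNReal.ofReal (((2:ℝ)^(m+2))⁻¹)
      = ∑' m : ℕ, ENNReal.ofReal (c * tser m) := by
        refine tsum_congr fun m => ?_
        rw [cast1 m]
        exact key m
    _ = ENNReal.ofReal (∑' m, c * tser m) :=
        (ENNReal.ofReal_tsum_of_nonneg (fun m => mul_nonneg hc0.le (tser_nonneg m))
          (tser_summable.mul_left c)).symm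
    _ = 1 := by
        rw [tsum_mul_left, hc', inv_mul_cancel₀ tsum_tser_pos.ne']
        exact ENNReal.ofReal_one

lemma isProb_Q1 (d₁ : ℝ → ℝ) (hd₁ : d₁ = fun ω => if ω ∈ Set.Ioc (2⁻¹ : ℝ) 1 then 2 else 0) :
    IsProbabilityMeasure (Pmeas.withDensity fun ω => ENNReal.ofReal (d₁ ω)) := by
  constructor
  rw [withDensity_apply _ MeasurableSet.univ, Measure.restrict_univ]
  have : (fun ω => ENNReal.ofReal (d₁ ω))
      = Set.indicator (Set.Ioc (2⁻¹ : ℝ) 1) (fun _ => (2 : ℝ≥0∞)) := by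
    funext ω
    rw [hd₁]
    by_cases h : ω ∈ Set.Ioc (2⁻¹ : ℝ) 1 <;> simp [h, Set.indicator_of_mem, ENNReal.ofReal_ofNat]
  rw [this, lintegral_indicator measurableSet_Ioc]
  rw [setLIntegral_const]
  have hinter : Set.Ioc (2⁻¹ : ℝ) 1 ∩ Set.Ioc 0 1 = Set.Ioc (2⁻¹ : ℝ) 1 := by
    rw [Set.inter_eq_left]
    intro x hx
    exact ⟨lt_trans (by norm_num) hx.1, hx.2⟩
  rw [Pmeas, Measure.restrict_apply measurableSet_Ioc, hinter, Real.volume_Ioc,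
    show (1:ℝ) - 2⁻¹ = 2⁻¹ by norm_num]
  have h2 : ENNReal.ofReal (2⁻¹:ℝ) = 2⁻¹ := by
    rw [ENNReal.ofReal_inv_of_pos (by norm_num)]
    norm_num
  rw [h2]
  exact ENNReal.mul_inv_cancel (by norm_num) (by norm_num)

instance Pmeas_finite : IsFiniteMeasure Pmeas := by
  constructor
  rw [Pmeas, Measure.restrict_apply_univ, Real.volume_Ioc]
  exact ENNReal.ofReal_lt_top

lemma exists_n {ω : ℝ} (hω : ω ∈ Set.Ioc (0:ℝ) 1) :
    ∃ n : ℕ, 1 ≤ n ∧ ω ∈ Iset n ∧ (n:ℝ) ≤ 1 + (-Real.log ω) / Real.log 2 := by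
  have := iUnion_Iset ▸ hω
  obtain ⟨m, hm⟩ := Set.mem_iUnion.mp this
  refine ⟨m + 1, Nat.le_add_left 1 m, hm, ?_⟩
  have hb := mem_Iset_bound (Nat.le_add_left 1 m) hm
  have hl2 : 0 < Real.log 2 := Real.log_pos (by norm_num)
  have h2 : ((m+1:ℕ):ℝ) - 1 ≤ (-Real.log ω) / Real.log 2 := (le_div_iff₀ hl2).mpr hb
  linarith

lemma phi_le {y : ℝ} (hy : 0 < y) : Phi y ≤ -Real.log y + y ^ 2 := by
  unfold Phi
  split_ifs with h
  · nlinarith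
  · push_neg at h
    have h1 : Real.log y ≤ y - 1 := Real.log_le_sub_one_of_pos hy
    nlinarith

lemma log_integrable : Integrable (fun ω => -Real.log ω) Pmeas := by
  have hg : IntegrableOn (fun ω : ℝ => 2 * ω ^ (-(2⁻¹:ℝ))) (Set.Ioc 0 1) volume := by
    have := intervalIntegral.intervalIntegrable_rpow' (a := 0) (b := 1)
      (by norm_num : (-1:ℝ) < -(2⁻¹:ℝ))
    rw [intervalIntegrable_iff_integrableOn_Ioc_of_le zero_le_one] at this
    exact this.const_mul 2
  refine Integrable.mono' hg Real.measurable_log.neg.aestronglyMeasurable ?_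
  rw [Pmeas]
  filter_upwards [ae_restrict_mem measurableSet_Ioc] with ω hω
  have hω0 : (0:ℝ) < ω := hω.1
  have hlog : Real.log ω ≤ 0 := Real.log_nonpos hω0.le hω.2
  have h1 : Real.log (ω ^ (-(2⁻¹:ℝ))) = -(2⁻¹:ℝ) * Real.log ω := Real.log_rpow hω0 _
  have h2 : Real.log (ω ^ (-(2⁻¹:ℝ))) ≤ ω ^ (-(2⁻¹:ℝ)) - 1 :=
    Real.log_le_sub_one_of_pos (Real.rpow_pos_of_pos hω0 _)
  have h3 : (0:ℝ) < ω ^ (-(2⁻¹:ℝ)) := Real.rpow_pos_of_pos hω0 _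
  rw [Real.norm_eq_abs, abs_of_nonneg (by linarith)]
  linarith

lemma log_lintegral_lt_top : ∫⁻ ω, ENNReal.ofReal (-Real.log ω) ∂Pmeas < ⊤ :=
  log_integrable.lintegral_lt_top

lemma ent_fin {d : ℝ → ℝ} {a M : ℝ} (ha : 0 < a)
    (h : ∀ ω ∈ Set.Ioc (0:ℝ) 1, ∃ n : ℕ, 1 ≤ n ∧ (n:ℝ) ≤ 1 + (-Real.log ω) / Real.log 2 ∧
      a * Real.exp (-(n:ℝ)) ≤ d ω ∧ d ω ≤ M) :
    entPos d < ⊤ := by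
  set C : ℝ := 1 + |Real.log a| + M ^ 2 with hC
  have hC0 : 0 ≤ C := by positivity
  set k : ℝ := (Real.log 2)⁻¹ with hk
  have hk0 : 0 ≤ k := inv_nonneg.mpr (Real.log_nonneg (by norm_num))
  have key : ∀ ω ∈ Set.Ioc (0:ℝ) 1, d ω ≠ 0 ∧ Phi (d ω) ≤ C + k * (-Real.log ω) := by
    intro ω hω
    obtain ⟨n, hn1, hnb, hlo, hhi⟩ := h ω hω
    have hd0 : 0 < d ω := lt_of_lt_of_le (by positivity) hlo
    refine ⟨hd0.ne', ?_⟩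
    have h1 : Phi (d ω) ≤ -Real.log (d ω) + (d ω) ^ 2 := phi_le hd0
    have h2 : Real.log (a * Real.exp (-(n:ℝ))) ≤ Real.log (d ω) :=
      Real.log_le_log (by positivity) hlo
    rw [Real.log_mul ha.ne' (Real.exp_ne_zero _), Real.log_exp] at h2
    have h3 : (d ω) ^ 2 ≤ M ^ 2 := by nlinarith
    have h4 : -Real.log (d ω) ≤ (n:ℝ) - Real.log a := by linarith
    have h5 : Real.log a ≥ -|Real.log a| := neg_abs_le _
    have hl2 : 0 < Real.log 2 := Real.log_pos (by norm_num)
    have h6 : (n:ℝ) ≤ 1 + k * (-Real.log ω) := by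
      rw [hk]; rw [div_eq_inv_mul] at hnb; linarith
    calc Phi (d ω) ≤ -Real.log (d ω) + (d ω)^2 := h1
      _ ≤ ((n:ℝ) - Real.log a) + M^2 := by linarith
      _ ≤ C + k * (-Real.log ω) := by rw [hC]; linarith
  have hmono : entPos d ≤ ∫⁻ ω, (ENNReal.ofReal C
      + ENNReal.ofReal k * ENNReal.ofReal (-Real.log ω)) ∂Pmeas := by
    unfold entPos
    refine lintegral_mono_ae ?_
    rw [Pmeas]
    filter_upwards [ae_restrict_mem measurableSet_Ioc] with ω hω
    obtain ⟨hne, hb⟩ := key ω hω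
    rw [if_neg hne]
    calc ENNReal.ofReal (Phi (d ω)) ≤ ENNReal.ofReal (C + k * (-Real.log ω)) :=
        ENNReal.ofReal_le_ofReal hb
      _ ≤ ENNReal.ofReal C + ENNReal.ofReal (k * (-Real.log ω)) := ENNReal.ofReal_add_le
      _ = _ := by rw [ENNReal.ofReal_mul hk0]
  refine lt_of_le_of_lt hmono ?_
  rw [lintegral_add_left measurable_const, lintegral_const,
    lintegral_const_mul _ (f := fun ω => ENNReal.ofReal (-Real.log ω)) (Real.measurable_log.neg.ennreal_ofReal)]
  have h1 : ENNReal.ofReal C * Pmeas Set.univ < ⊤ :=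
    ENNReal.mul_lt_top ENNReal.ofReal_lt_top (measure_lt_top _ _)
  have h2 : ENNReal.ofReal k * ∫⁻ ω, ENNReal.ofReal (-Real.log ω) ∂Pmeas < ⊤ :=
    ENNReal.mul_lt_top ENNReal.ofReal_lt_top log_lintegral_lt_top
  exact ENNReal.add_lt_top.mpr ⟨h1, h2⟩

lemma ent_d1_top (d₁ : ℝ → ℝ) (hd₁ : d₁ = fun ω => if ω ∈ Set.Ioc (2⁻¹ : ℝ) 1 then 2 else 0) :
    entPos d₁ = ⊤ := by
  rw [eq_top_iff]
  have hconst : ∀ ω ∈ Set.Ioc (0:ℝ) 2⁻¹,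
      (if d₁ ω = 0 then (⊤:ℝ≥0∞) else ENNReal.ofReal (Phi (d₁ ω))) = ⊤ := by
    intro ω hω
    have : d₁ ω = 0 := by
      rw [hd₁]
      simp only []
      rw [if_neg]
      simp only [Set.mem_Ioc]
      push_neg
      intro hcon
      linarith [hω.2, hcon]
    rw [if_pos this]
  have h1 : (⊤:ℝ≥0∞) = ∫⁻ ω in Set.Ioc (0:ℝ) 2⁻¹,
      (if d₁ ω = 0 then ⊤ else ENNReal.ofReal (Phi (d₁ ω))) ∂Pmeas := by
    rw [setLIntegral_congr_fun measurableSet_Ioc hconst,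
      setLIntegral_const]
    have hint : Set.Ioc (0:ℝ) 2⁻¹ ∩ Set.Ioc 0 1 = Set.Ioc (0:ℝ) 2⁻¹ := by
      rw [Set.inter_eq_left]
      exact fun x hx => ⟨hx.1, le_trans hx.2 (by norm_num)⟩
    rw [Pmeas, Measure.restrict_apply measurableSet_Ioc, hint, Real.volume_Ioc,
      ENNReal.top_mul]
    rw [ne_eq, ENNReal.ofReal_eq_zero]
    norm_num
  rw [h1]
  exact setLIntegral_le_lintegral _ _

/-- from an a.e. lower bound and constancy on a positive-measure subset of `(0,1]`,
deduce the bound for the constant. -/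
lemma ae_const_bound {α X₁ : ℝ → ℝ} {c₀ : ℝ} (hae : ∀ᵐ ω ∂Pmeas, -c₀ ≤ α ω * X₁ ω)
    {s : Set ℝ} (hs : MeasurableSet s) (hs1 : s ⊆ Set.Ioc 0 1) (hpos : volume s ≠ 0)
    {K : ℝ} (hconst : ∀ ω ∈ s, α ω * X₁ ω = K) : -c₀ ≤ K := by
  by_contra hcon
  have hsub : s ⊆ {ω | ¬ (-c₀ ≤ α ω * X₁ ω)} := fun ω hω => by
    rw [Set.mem_setOf_eq, hconst ω hω]; exact hcon
  have h0 : Pmeas {ω | ¬ (-c₀ ≤ α ω * X₁ ω)} = 0 := ae_iff.mp hae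
  have : Pmeas s = 0 := measure_mono_null hsub h0
  rw [Pmeas, Measure.restrict_apply hs, Set.inter_eq_left.mpr hs1] at this
  exact hpos this

lemma sep_cond (X₁ : ℝ → ℝ)
    (hX₁ : ∀ n : ℕ, 1 ≤ n →
      (∀ ω ∈ J1 n, X₁ ω = (n : ℝ)) ∧ (∀ ω ∈ J2 n, X₁ ω = -((n : ℝ) ^ 2)))
    (d : ℝ → ℝ) (hdm : Measurable d) (v : ℕ → ℝ) (hv : ∀ n, 0 ≤ v n)
    (B : ℝ) (hB : ∀ n : ℕ, 1 ≤ n → ((n:ℝ)) ^ 2 * v n ≤ B)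
    (hd1 : ∀ n : ℕ, 1 ≤ n → ∀ ω ∈ J1 n, d ω = (n:ℝ) * v n)
    (hd2 : ∀ n : ℕ, 1 ≤ n → ∀ ω ∈ J2 n, d ω = v n)
    (α : ℝ → ℝ) (hα : IsAdmissible X₁ α) :
    Integrable (fun ω => α ω * X₁ ω) (Pmeas.withDensity fun ω => ENNReal.ofReal (d ω)) ∧
    ∫ ω, α ω * X₁ ω ∂(Pmeas.withDensity fun ω => ENNReal.ofReal (d ω)) ≤ 0 := by
  obtain ⟨⟨a, ha⟩, c₀, hc₀, hae⟩ := hα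
  -- values of F = d • (α X₁) on the pieces
  set F : ℝ → ℝ := fun ω => ((d ω).toNNReal : ℝ) * (α ω * X₁ ω) with hF
  have hFJ1 : ∀ n : ℕ, 1 ≤ n → ∀ ω ∈ J1 n, F ω = a n * (n:ℝ)^2 * v n := by
    intro n hn ω hω
    have hωI : ω ∈ Iset n := (J1_union_J2 hn) ▸ Set.mem_union_left _ hω
    rw [hF]
    simp only []
    rw [hd1 n hn ω hω, (hX₁ n hn).1 ω hω, ha n hn ω hωI,
      Real.coe_toNNReal _ (mul_nonneg (Nat.cast_nonneg n) (hv n))]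
    ring
  have hFJ2 : ∀ n : ℕ, 1 ≤ n → ∀ ω ∈ J2 n, F ω = -(a n * (n:ℝ)^2 * v n) := by
    intro n hn ω hω
    have hωI : ω ∈ Iset n := (J1_union_J2 hn) ▸ Set.mem_union_right _ hω
    rw [hF]
    simp only []
    rw [hd2 n hn ω hω, (hX₁ n hn).2 ω hω, ha n hn ω hωI, Real.coe_toNNReal _ (hv n)]
    ring
  -- bound |a n| ≤ c₀ for n ≥ 1
  have hvolJ1 : ∀ n : ℕ, 1 ≤ n → volume (J1 n) ≠ 0 := by
    intro n hn
    rw [vol_J1 hn, ne_eq, ENNReal.ofReal_eq_zero, not_le]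
    positivity
  have hvolJ2 : ∀ n : ℕ, 1 ≤ n → volume (J2 n) ≠ 0 := by
    intro n hn
    rw [vol_J2 hn, ne_eq, ENNReal.ofReal_eq_zero, not_le]
    positivity
  have haX1 : ∀ n : ℕ, 1 ≤ n → -c₀ ≤ a n * (n:ℝ) := by
    intro n hn
    refine ae_const_bound hae measurableSet_Ioc (J1_subset hn) (hvolJ1 n hn) fun ω hω => ?_
    have hωI : ω ∈ Iset n := (J1_union_J2 hn) ▸ Set.mem_union_left _ hω
    rw [(hX₁ n hn).1 ω hω, ha n hn ω hωI]
  have haX2 : ∀ n : ℕ, 1 ≤ n → -c₀ ≤ -(a n * (n:ℝ)^2) := by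
    intro n hn
    refine ae_const_bound hae measurableSet_Ioc (J2_subset hn) (hvolJ2 n hn) fun ω hω => ?_
    have hωI : ω ∈ Iset n := (J1_union_J2 hn) ▸ Set.mem_union_right _ hω
    rw [(hX₁ n hn).2 ω hω, ha n hn ω hωI]
    ring
  have haboundn : ∀ n : ℕ, 1 ≤ n → |a n * (n:ℝ)^2 * v n| ≤ c₀ * B := by
    intro n hn
    have hn1 : (1:ℝ) ≤ (n:ℝ) := by exact_mod_cast hn
    have h1 := haX1 n hn
    have h2 := haX2 n hn
    have hvb : 0 ≤ (n:ℝ)^2 * v n := mul_nonneg (by positivity) (hv n)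
    have hBn : (n:ℝ)^2 * v n ≤ B := hB n hn
    have hnv : 0 ≤ (n:ℝ) * v n := mul_nonneg (Nat.cast_nonneg n) (hv n)
    rw [abs_le]
    constructor
    · have e : a n * (n:ℝ)^2 * v n = (a n * (n:ℝ)) * ((n:ℝ) * v n) := by ring
      have l1 : -c₀ * ((n:ℝ)*v n) ≤ (a n * (n:ℝ)) * ((n:ℝ)*v n) :=
        mul_le_mul_of_nonneg_right h1 hnv
      have l2 : (n:ℝ)*v n ≤ (n:ℝ)^2*v n := by nlinarith [hv n]
      have l3 : c₀*((n:ℝ)*v n) ≤ c₀*B := mul_le_mul_of_nonneg_left (l2.trans hBn) hc₀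
      rw [e]
      linarith
    · have hup : a n * (n:ℝ)^2 ≤ c₀ := by linarith
      have e : a n * (n:ℝ)^2 * v n = (a n * (n:ℝ)^2) * v n := by ring
      have u1 : (a n * (n:ℝ)^2) * v n ≤ c₀ * v n := mul_le_mul_of_nonneg_right hup (hv n)
      have u2 : v n ≤ B := by nlinarith [hv n]
      have u3 : c₀ * v n ≤ c₀ * B := mul_le_mul_of_nonneg_left u2 hc₀
      rw [e]
      linarith
  -- a.e. membership decomposition
  have haemem : ∀ᵐ ω ∂Pmeas, ω ∈ Set.Ioc (0:ℝ) 1 := by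
    rw [Pmeas]; exact ae_restrict_mem measurableSet_Ioc
  -- measurability of F w.r.t. Pmeas
  have hFmeas : AEStronglyMeasurable F Pmeas := by
    have h1 : Pmeas = volume.restrict (⋃ m : ℕ, Iset (m+1)) := by rw [iUnion_Iset]; rfl
    rw [h1]
    refine (aemeasurable_iUnion_iff.mpr fun m => ?_).aestronglyMeasurable
    have hm : 1 ≤ m + 1 := Nat.le_add_left 1 m
    have h2 : Iset (m+1) = J1 (m+1) ∪ J2 (m+1) := (J1_union_J2 hm).symm
    rw [h2, Set.union_eq_iUnion]
    refine aemeasurable_iUnion_iff.mpr fun b => ?_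
    cases b
    · -- cond false = J2
      simp only [cond_false]
      refine (aemeasurable_const (b := -(a (m+1) * ((m+1:ℕ):ℝ)^2 * v (m+1)))).congr ?_
      exact (ae_restrict_iff' (μ := volume) (s := J2 (m+1)) measurableSet_Ioc).mpr
        (Filter.Eventually.of_forall fun ω hω => (hFJ2 (m+1) hm ω hω).symm)
    · simp only [cond_true]
      refine (aemeasurable_const (b := a (m+1) * ((m+1:ℕ):ℝ)^2 * v (m+1))).congr ?_
      exact (ae_restrict_iff' (μ := volume) (s := J1 (m+1)) measurableSet_Ioc).mpr
        (Filter.Eventually.of_forall fun ω hω => (hFJ1 (m+1) hm ω hω).symm)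
  -- integrability of F
  have hFbound : ∀ᵐ ω ∂Pmeas, ‖F ω‖ ≤ c₀ * B := by
    filter_upwards [haemem] with ω hω
    rw [← iUnion_Iset] at hω
    obtain ⟨m, hm⟩ := Set.mem_iUnion.mp hω
    have hm1 : 1 ≤ m + 1 := Nat.le_add_left 1 m
    rw [← J1_union_J2 hm1] at hm
    rw [Real.norm_eq_abs]
    rcases hm with h | h
    · rw [hFJ1 (m+1) hm1 ω h]; exact haboundn (m+1) hm1
    · rw [hFJ2 (m+1) hm1 ω h, abs_neg]; exact haboundn (m+1) hm1
  have hFint : Integrable F Pmeas :=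
    Integrable.mono' (integrable_const (c₀ * B)) hFmeas hFbound
  -- transfer to withDensity
  have hgm : Measurable fun ω => (d ω).toNNReal := hdm.real_toNNReal
  have hdens : (fun ω => ENNReal.ofReal (d ω)) = (fun ω => ((d ω).toNNReal : ℝ≥0∞)) := rfl
  have hsmul : (fun ω => (d ω).toNNReal • (α ω * X₁ ω)) = F := by
    funext ω
    rw [hF, NNReal.smul_def]
    norm_num
  have hint : Integrable (fun ω => α ω * X₁ ω)
      (Pmeas.withDensity fun ω => ENNReal.ofReal (d ω)) := by
    rw [hdens, integrable_withDensity_iff_integrable_smul hgm, hsmul]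
    exact hFint
  refine ⟨hint, ?_⟩
  -- integral computation
  have hIeq : ∫ ω, α ω * X₁ ω ∂(Pmeas.withDensity fun ω => ENNReal.ofReal (d ω))
      = ∫ ω, F ω ∂Pmeas := by
    rw [hdens, integral_withDensity_eq_integral_smul hgm]
    exact integral_congr_ae (Filter.Eventually.of_forall fun ω => congrFun hsmul ω)
  rw [hIeq]
  have hPeq : Pmeas = volume.restrict (⋃ m : ℕ, Iset (m+1)) := by rw [iUnion_Iset]; rfl
  have hFint' : IntegrableOn F (⋃ m : ℕ, Iset (m+1)) volume := by
    rw [IntegrableOn, ← hPeq]; exact hFint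
  have : ∫ ω, F ω ∂Pmeas = ∑' m : ℕ, ∫ ω in Iset (m+1), F ω := by
    rw [hPeq]
    exact integral_iUnion (fun _ => measurableSet_Ioc) Iset_pairwise_disjoint hFint'
  rw [this]
  have hzero : ∀ m : ℕ, ∫ ω in Iset (m+1), F ω = 0 := by
    intro m
    have hm : 1 ≤ m + 1 := Nat.le_add_left 1 m
    have h2 : Iset (m+1) = J1 (m+1) ∪ J2 (m+1) := (J1_union_J2 hm).symm
    have hi1 : IntegrableOn F (J1 (m+1)) volume :=
      hFint'.mono_set ((Set.subset_union_left).trans (h2 ▸ Set.subset_iUnion (fun m : ℕ => Iset (m+1)) m))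
    have hi2 : IntegrableOn F (J2 (m+1)) volume :=
      hFint'.mono_set ((Set.subset_union_right).trans (h2 ▸ Set.subset_iUnion (fun m : ℕ => Iset (m+1)) m))
    rw [h2, setIntegral_union (J1_J2_disjoint (m+1)) measurableSet_Ioc hi1 hi2]
    have e1 : ∫ ω in J1 (m+1), F ω = (volume (J1 (m+1))).toReal • (a (m+1) * ((m+1:ℕ):ℝ)^2 * v (m+1)) :=
      calc ∫ ω in J1 (m+1), F ω
          = ∫ _ in J1 (m+1), (a (m+1) * ((m+1:ℕ):ℝ)^2 * v (m+1)) :=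
            setIntegral_congr_fun measurableSet_Ioc (hFJ1 (m+1) hm)
        _ = _ := setIntegral_const _
    have e2 : ∫ ω in J2 (m+1), F ω = (volume (J2 (m+1))).toReal • (-(a (m+1) * ((m+1:ℕ):ℝ)^2 * v (m+1))) :=
      calc ∫ ω in J2 (m+1), F ω
          = ∫ _ in J2 (m+1), (-(a (m+1) * ((m+1:ℕ):ℝ)^2 * v (m+1))) :=
            setIntegral_congr_fun measurableSet_Ioc (hFJ2 (m+1) hm)
        _ = _ := setIntegral_const _
    rw [e1, e2, vol_J1 hm, vol_J2 hm]
    simp only [smul_eq_mul]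
    ring
  rw [tsum_congr hzero, tsum_zero]


lemma sq_exp_bound (x : ℝ) (hx : 0 ≤ x) : x ^ 2 * Real.exp (-x) ≤ 4 := by
  have h1 : x / 2 + 1 ≤ Real.exp (x / 2) := Real.add_one_le_exp _
  have h2 : Real.exp (x / 2) * Real.exp (x / 2) = Real.exp x := by
    rw [← Real.exp_add]; ring_nf
  have h3 : x ^ 2 / 4 ≤ Real.exp x := by nlinarith [Real.exp_pos (x / 2)]
  have h4 : Real.exp (-x) = (Real.exp x)⁻¹ := Real.exp_neg x
  have h5 : (0:ℝ) < (Real.exp x)⁻¹ := by positivity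
  rw [h4]
  nlinarith [mul_le_mul_of_nonneg_right h3 h5.le, mul_inv_cancel₀ (Real.exp_pos x).ne']

lemma lin_exp_bound (x : ℝ) (hx : 0 ≤ x) : x * Real.exp (-x) ≤ 1 := by
  have h1 : x + 1 ≤ Real.exp x := Real.add_one_le_exp _
  have h4 : Real.exp (-x) = (Real.exp x)⁻¹ := Real.exp_neg x
  have h5 : (0:ℝ) < (Real.exp x)⁻¹ := by positivity
  rw [h4]
  nlinarith [mul_le_mul_of_nonneg_right h1 h5.le, mul_inv_cancel₀ (Real.exp_pos x).ne']

/-- Example 21 of Biagini–Frittelli: with `Φ` convex on `(0,∞)` and `Φ(0) = +∞`, the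
separating measure `Q₁` with bounded density `2·1_{(1/2,1]}` has infinite generalized
entropy, the separating measure `Q₀` with density `c·n·e^{-n}` on `J_n^1` and `c·e^{-n}`
on `J_n^2` has finite generalized entropy, and nevertheless every convex combination
`Q^x = (1-x)Q₀ + xQ₁`, `x ∈ (0,1)`, has finite generalized entropy. -/
theorem example21_entropy_convex_combination
    (X₁ : ℝ → ℝ)
    (hX₁ : ∀ n : ℕ, 1 ≤ n →
      (∀ ω ∈ J1 n, X₁ ω = (n : ℝ)) ∧ (∀ ω ∈ J2 n, X₁ ω = -((n : ℝ) ^ 2)))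
    (c : ℝ)
    (hc : c = (∑' n : ℕ, ((n : ℝ) + 2) * Real.exp (-((n : ℝ) + 1)) *
      (((2 : ℝ) ^ (n + 2))⁻¹))⁻¹)
    (d₀ : ℝ → ℝ) (hd₀m : Measurable d₀)
    (hd₀ : ∀ n : ℕ, 1 ≤ n →
      (∀ ω ∈ J1 n, d₀ ω = c * (n : ℝ) * Real.exp (-(n : ℝ))) ∧
      (∀ ω ∈ J2 n, d₀ ω = c * Real.exp (-(n : ℝ))))
    (d₁ : ℝ → ℝ) (hd₁ : d₁ = fun ω => if ω ∈ Set.Ioc (2⁻¹ : ℝ) 1 then 2 else 0)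
    (Q₀ Q₁ : Measure ℝ)
    (hQ₀ : Q₀ = Pmeas.withDensity (fun ω => ENNReal.ofReal (d₀ ω)))
    (hQ₁ : Q₁ = Pmeas.withDensity (fun ω => ENNReal.ofReal (d₁ ω))) :
    ConvexOn ℝ (Set.Ioi 0) Phi ∧
    Filter.Tendsto Phi (nhdsWithin 0 (Set.Ioi 0)) Filter.atTop ∧
    Q₀ ∈ SepMeasures X₁ ∧ Q₁ ∈ SepMeasures X₁ ∧
    entPos d₀ < ⊤ ∧ entPos d₁ = ⊤ ∧
    ∀ x : ℝ, x ∈ Set.Ioo (0 : ℝ) 1 →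
      entPos (fun ω => (1 - x) * d₀ ω + x * d₁ ω) < ⊤ := by

  have hc' : c = (∑' n, tser n)⁻¹ := hc
  have hc0 : 0 < c := hc' ▸ inv_pos.mpr tsum_tser_pos
  -- bounds for d₀ on (0,1]
  have d0_bounds : ∀ ω ∈ Set.Ioc (0:ℝ) 1, ∃ n : ℕ, 1 ≤ n ∧
      (n:ℝ) ≤ 1 + (-Real.log ω) / Real.log 2 ∧
      c * Real.exp (-(n:ℝ)) ≤ d₀ ω ∧ d₀ ω ≤ c := by
    intro ω hω
    obtain ⟨n, hn1, hnI, hnb⟩ := exists_n hω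
    refine ⟨n, hn1, hnb, ?_⟩
    have hn1' : (1:ℝ) ≤ (n:ℝ) := by exact_mod_cast hn1
    have he : (0:ℝ) < Real.exp (-(n:ℝ)) := Real.exp_pos _
    rw [← J1_union_J2 hn1] at hnI
    rcases hnI with h | h
    · rw [(hd₀ n hn1).1 ω h]
      constructor
      · nlinarith [mul_le_mul_of_nonneg_left hn1' (mul_pos hc0 he).le]
      · have := lin_exp_bound (n:ℝ) (by positivity)
        nlinarith
    · rw [(hd₀ n hn1).2 ω h]
      constructor
      · exact le_refl _
      · have hle1 : Real.exp (-(n:ℝ)) ≤ 1 := Real.exp_le_one_iff.mpr (by linarith)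
        nlinarith
  have d1_bounds : ∀ ω : ℝ, 0 ≤ d₁ ω ∧ d₁ ω ≤ 2 := by
    intro ω
    rw [hd₁]
    by_cases h : ω ∈ Set.Ioc (2⁻¹:ℝ) 1 <;> simp [h]
  refine ⟨phi_convex, phi_tendsto, ?_, ?_, ?_, ent_d1_top d₁ hd₁, ?_⟩
  · -- Q₀ separating
    rw [hQ₀]
    refine ⟨isProb_Q0 c hc' d₀ hd₀, withDensity_absolutelyContinuous _ _, fun α hα => ?_⟩
    refine sep_cond X₁ hX₁ d₀ hd₀m (fun n => c * Real.exp (-(n:ℝ))) (fun n => by positivity)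
      (4 * c) (fun n hn => ?_) (fun n hn ω hω => by rw [(hd₀ n hn).1 ω hω]; ring)
      (fun n hn ω hω => (hd₀ n hn).2 ω hω) α hα
    show (n:ℝ) ^ 2 * (c * Real.exp (-(n:ℝ))) ≤ 4 * c
    have h4 := sq_exp_bound (n:ℝ) (by positivity)
    nlinarith [mul_le_mul_of_nonneg_left h4 hc0.le]
  · -- Q₁ separating
    rw [hQ₁]
    have hd₁m : Measurable d₁ := by
      rw [hd₁]; exact Measurable.ite measurableSet_Ioc measurable_const measurable_const
    have hJ1sub : ∀ n : ℕ, 2 ≤ n → ∀ ω ∈ J1 n, ω ∉ Set.Ioc (2⁻¹:ℝ) 1 := by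
      intro n hn ω hω hmem
      have h8 : (8:ℝ) ≤ 2 ^ (n+1) := by
        calc (8:ℝ) = 2 ^ 3 := by norm_num
          _ ≤ 2 ^ (n+1) := pow_le_pow_right₀ (by norm_num) (by omega)
      have : ω ≤ 3 * ((2:ℝ) ^ (n+1))⁻¹ := hω.2
      have h2 : 3 * ((2:ℝ) ^ (n+1))⁻¹ ≤ 3 / 8 := by
        have h3 : ((2:ℝ) ^ (n+1))⁻¹ ≤ 8⁻¹ := inv_anti₀ (by norm_num) h8
        linarith
      have := hmem.1
      linarith
    have hJ2sub : ∀ n : ℕ, 2 ≤ n → ∀ ω ∈ J2 n, ω ∉ Set.Ioc (2⁻¹:ℝ) 1 := by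
      intro n hn ω hω hmem
      obtain ⟨m, rfl⟩ := Nat.exists_eq_add_of_le' (le_trans one_le_two hn)
      have h1 : (1:ℕ) ≤ m := by omega
      have : ω ≤ ((2:ℝ) ^ (m + 1 - 1))⁻¹ := hω.2
      simp only [Nat.add_sub_cancel] at this
      have h2 : ((2:ℝ) ^ m)⁻¹ ≤ 2⁻¹ := by
        apply inv_anti₀ (by norm_num)
        calc (2:ℝ) = 2 ^ 1 := by norm_num
          _ ≤ 2 ^ m := pow_le_pow_right₀ (by norm_num) h1
      have := hmem.1
      linarith
    refine ⟨isProb_Q1 d₁ hd₁, withDensity_absolutelyContinuous _ _, fun α hα => ?_⟩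
    have hval : ∀ ω : ℝ, d₁ ω = (if ω ∈ Set.Ioc (2⁻¹:ℝ) 1 then (2:ℝ) else 0) :=
      fun ω => by rw [hd₁]
    refine sep_cond X₁ hX₁ d₁ hd₁m (fun n => if n = 1 then (2:ℝ) else 0)
      (fun n => ?_) 2 (fun n hn => ?_) (fun n hn ω hω => ?_)
      (fun n hn ω hω => ?_) α hα
    · show (0:ℝ) ≤ if n = 1 then (2:ℝ) else 0
      split_ifs <;> norm_num
    · show (n:ℝ) ^ 2 * (if n = 1 then (2:ℝ) else 0) ≤ 2
      split_ifs with h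
      · subst h; norm_num
      · rw [mul_zero]; norm_num
    · show d₁ ω = (n:ℝ) * (if n = 1 then (2:ℝ) else 0)
      rcases eq_or_lt_of_le hn with h | h
      · have h1 : n = 1 := h.symm
        subst h1
        have hmem : ω ∈ Set.Ioc (2⁻¹:ℝ) 1 := by
          constructor
          · have h2 := hω.1
            norm_num at h2
            linarith
          · have h2 := hω.2
            norm_num at h2
            linarith
        rw [hval, if_pos hmem, if_pos rfl]
        norm_num
      · have hn2 : 2 ≤ n := h
        rw [hval, if_neg (hJ1sub n hn2 ω hω), if_neg (by omega : ¬ n = 1)]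
        ring
    · show d₁ ω = (if n = 1 then (2:ℝ) else 0)
      rcases eq_or_lt_of_le hn with h | h
      · have h1 : n = 1 := h.symm
        subst h1
        have hmem : ω ∈ Set.Ioc (2⁻¹:ℝ) 1 := by
          constructor
          · have h2 := hω.1
            norm_num at h2
            linarith
          · have h2 := hω.2
            norm_num at h2
            linarith
        rw [hval, if_pos hmem, if_pos rfl]
      · have hn2 : 2 ≤ n := h
        rw [hval, if_neg (hJ2sub n hn2 ω hω), if_neg (by omega : ¬ n = 1)]
  · -- entPos d₀ < ⊤
    exact ent_fin hc0 d0_bounds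
  · -- mixed
    intro x hx
    obtain ⟨hx0, hx1⟩ := hx
    refine ent_fin (a := (1-x)*c) (M := c + 2) (by nlinarith) fun ω hω => ?_
    obtain ⟨n, hn1, hnb, hlo, hhi⟩ := d0_bounds ω hω
    obtain ⟨hd1lo, hd1hi⟩ := d1_bounds ω
    refine ⟨n, hn1, hnb, ?_, ?_⟩
    · have he : (0:ℝ) < Real.exp (-(n:ℝ)) := Real.exp_pos _
      nlinarith
    · nlinarith
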